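/- A positive vector x is a fixed point of T (i.e., x = T x) if and only if x is an eigenvector of its own Jacobian with eigenvalue 1, i.e., x = J_T(x) · x. -/

import Mathlib

open Matrix

/-- x is a fixed point of T iff x = J_T(x) · x. -/
theorem stmt_6 (n : ℕ) (A : Matrix (Fin n) (Fin n) ℝ) (hA : ∀ i j, 0 < A i j)
    (x : Fin n → ℝ) (hx : ∀ i, 0 < x i) :
    x = (Aᵀ *ᵥ (A *ᵥ x)⁻¹)⁻¹ ↔
      x = ((Matrix.diagonal ((Aᵀ *ᵥ (A *ᵥ x)⁻¹)⁻¹)) ^ 2 * Aᵀ *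
           (Matrix.diagonal ((A *ᵥ x)⁻¹)) ^ 2 * A) *ᵥ x := by
  have hy : ∀ k, 0 < (A *ᵥ x) k := by
    intro k
    exact Finset.sum_pos (fun j _ => mul_pos (hA k j) (hx j)) ⟨k, Finset.mem_univ k⟩
  have hu : ∀ i, 0 < (Aᵀ *ᵥ (A *ᵥ x)⁻¹) i := by
    intro i
    exact Finset.sum_pos
      (fun k _ => mul_pos (hA k i) (inv_pos.mpr (hy k))) ⟨i, Finset.mem_univ i⟩
  have key : ((Matrix.diagonal ((Aᵀ *ᵥ (A *ᵥ x)⁻¹)⁻¹)) ^ 2 * Aᵀ *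
      (Matrix.diagonal ((A *ᵥ x)⁻¹)) ^ 2 * A) *ᵥ x = (Aᵀ *ᵥ (A *ᵥ x)⁻¹)⁻¹ := by
    rw [Matrix.mul_assoc, Matrix.mul_assoc, ← Matrix.mulVec_mulVec,
      ← Matrix.mulVec_mulVec, ← Matrix.mulVec_mulVec]
    have h1 : (Matrix.diagonal ((A *ᵥ x)⁻¹)) ^ 2 *ᵥ (A *ᵥ x) = (A *ᵥ x)⁻¹ := by
      funext k
      rw [Matrix.diagonal_pow, Matrix.mulVec_diagonal]
      simp only [Pi.pow_apply, Pi.inv_apply]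
      field_simp
    rw [h1]
    funext i
    rw [Matrix.diagonal_pow, Matrix.mulVec_diagonal]
    simp only [Pi.pow_apply, Pi.inv_apply]
    have := (hu i).ne'
    field_simp
  rw [key]
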